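/- There exists an instance of a path graph and two agents with identical additive utilities that admits a connected allocation which is EF1 but not PMMS. -/

import Mathlib

namespace GraphFair

variable {V : Type*}

/-- A bundle is connected if it is empty or induces a connected subgraph of `G`. -/
def BundleConn (G : SimpleGraph V) (B : Finset V) : Prop :=
  B = ∅ ∨ (G.induce (B : Set V)).Connected

/-- A connected allocation of all the items among `n` agents: the bundles cover `V`,
are pairwise disjoint, and each bundle is connected in `G`. -/
def IsConnAlloc (G : SimpleGraph V) {n : ℕ} (A : Fin n → Finset V) : Prop :=
  (∀ v : V, ∃ i, v ∈ A i) ∧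
  (∀ i j : Fin n, i ≠ j → Disjoint (A i) (A j)) ∧
  (∀ i, BundleConn G (A i))

variable [DecidableEq V]

/-- Partitions of `X` into two bundles, each connected in the induced subgraph `G[X]`
(for `Y ⊆ X`, connectivity of `Y` in `G[X]` is the same as connectivity of `Y` in `G`). -/
def Part2 (G : SimpleGraph V) (X : Finset V) : Set (Finset V × Finset V) :=
  {p | p.1 ∪ p.2 = X ∧ Disjoint p.1 p.2 ∧ BundleConn G p.1 ∧ BundleConn G p.2}

/-- The pairwise maximin share of a bundle `X` with respect to utility `u`:
the maximum over partitions of `X` into two connected bundles of the minimum utility. -/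
noncomputable def pmms (G : SimpleGraph V) (u : Finset V → ℝ) (X : Finset V) : ℝ :=
  sSup ((fun p : Finset V × Finset V => min (u p.1) (u p.2)) '' Part2 G X)

/-- The `n`-agent maximin share of the whole vertex set: maximum over partitions of `V`
into `n` connected bundles of the minimum utility of a bundle. -/
noncomputable def mms (G : SimpleGraph V) (u : Finset V → ℝ) (n : ℕ) : ℝ :=
  sSup ((fun A : Fin n → Finset V => ⨅ i, u (A i)) '' {A | IsConnAlloc G A})

/-- Agents `i` and `j` are adjacent under allocation `A`. -/
def AdjUnder (G : SimpleGraph V) {n : ℕ} (A : Fin n → Finset V) (i j : Fin n) : Prop :=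
  ∃ v ∈ A i, ∃ w ∈ A j, G.Adj v w

/-- An allocation is `α`-PMMS if every agent with an empty bundle, and every agent with
respect to each of her neighbours, receives at least `α` times her pairwise maximin share. -/
def IsAlphaPMMS (G : SimpleGraph V) {n : ℕ} (u : Fin n → Finset V → ℝ)
    (A : Fin n → Finset V) (α : ℝ) : Prop :=
  ∀ i j : Fin n, i ≠ j → (A i = ∅ ∨ AdjUnder G A i j) →
    α * pmms G (u i) (A i ∪ A j) ≤ u i (A i)

/-- An allocation is `α`-MMS if every agent receives at least `α` times her maximin share. -/
def IsAlphaMMS (G : SimpleGraph V) {n : ℕ} (u : Fin n → Finset V → ℝ)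
    (A : Fin n → Finset V) (α : ℝ) : Prop :=
  ∀ i : Fin n, α * mms G (u i) n ≤ u i (A i)

/-- An additive (nonnegative) utility function. -/
def AdditiveUtil (u : Finset V → ℝ) : Prop :=
  (∀ X : Finset V, u X = ∑ v ∈ X, u {v}) ∧ ∀ v : V, 0 ≤ u {v}

/-- A binary additive utility function. -/
def BinaryAdditiveUtil (u : Finset V → ℝ) : Prop :=
  (∀ X : Finset V, u X = ∑ v ∈ X, u {v}) ∧ ∀ v : V, u {v} = 0 ∨ u {v} = 1

/-- A monotone (nonnegative) utility function. -/
def MonotoneUtil (u : Finset V → ℝ) : Prop :=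
  (∀ X Y : Finset V, X ⊆ Y → u X ≤ u Y) ∧ 0 ≤ u ∅

/-- An allocation is `α`-EF1. -/
def IsAlphaEF1 {n : ℕ} (u : Fin n → Finset V → ℝ) (A : Fin n → Finset V) (α : ℝ) : Prop :=
  ∀ i j : Fin n, i ≠ j → A j ≠ ∅ → ∃ v ∈ A j, α * u i ((A j).erase v) ≤ u i (A i)

/-- An allocation is EFX (envy-free up to any item). -/
def IsEFX {n : ℕ} (u : Fin n → Finset V → ℝ) (A : Fin n → Finset V) : Prop :=
  ∀ i j : Fin n, i ≠ j → A j ≠ ∅ → ∀ v ∈ A j, u i ((A j).erase v) ≤ u i (A i)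

/-- The number of agents receiving positive utility. -/
noncomputable def nashCount {n : ℕ} (u : Fin n → Finset V → ℝ) (A : Fin n → Finset V) : ℕ :=
  (Finset.univ.filter fun i : Fin n => 0 < u i (A i)).card

/-- The product of the positive utilities. -/
noncomputable def nashProd {n : ℕ} (u : Fin n → Finset V → ℝ) (A : Fin n → Finset V) : ℝ :=
  ∏ i ∈ Finset.univ.filter (fun i : Fin n => 0 < u i (A i)), u i (A i)

/-- A maximum Nash welfare (MNW) connected allocation: maximizes the number of agents with
positive utility and, subject to that, the product of the positive utilities. -/
def IsMNW (G : SimpleGraph V) {n : ℕ} (u : Fin n → Finset V → ℝ)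
    (A : Fin n → Finset V) : Prop :=
  IsConnAlloc G A ∧
  (∀ B : Fin n → Finset V, IsConnAlloc G B → nashCount u B ≤ nashCount u A) ∧
  (∀ B : Fin n → Finset V, IsConnAlloc G B →
    nashCount u B = nashCount u A → nashProd u B ≤ nashProd u A)

/-- `A'` is a Pareto-improvement of `A`. -/
def ParetoImproves {n : ℕ} (u : Fin n → Finset V → ℝ) (A' A : Fin n → Finset V) : Prop :=
  (∀ i, u i (A i) ≤ u i (A' i)) ∧ ∃ j, u j (A j) < u j (A' j)

/-- A connected allocation is Pareto-optimal if no connected allocation Pareto-improves it. -/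
def IsParetoOptimal (G : SimpleGraph V) {n : ℕ} (u : Fin n → Finset V → ℝ)
    (A : Fin n → Finset V) : Prop :=
  ∀ B : Fin n → Finset V, IsConnAlloc G B → ¬ ParetoImproves u B A

/-- The vector of agents' utilities rearranged in increasing order. -/
noncomputable def sortedUtils {n : ℕ} (u : Fin n → Finset V → ℝ)
    (A : Fin n → Finset V) : List ℝ :=
  (((Finset.univ : Finset (Fin n)).val.map fun i => u i (A i)).sort (· ≤ ·))

/-- `A'` is a leximin improvement of `A`: the sorted utility vector of `A'` is
lexicographically greater than that of `A`. -/
def LeximinImproves {n : ℕ} (u : Fin n → Finset V → ℝ) (A' A : Fin n → Finset V) : Prop :=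
  List.Lex (· < ·) (sortedUtils u A) (sortedUtils u A')

/-- A connected leximin allocation. -/
def IsLeximin (G : SimpleGraph V) {n : ℕ} (u : Fin n → Finset V → ℝ)
    (A : Fin n → Finset V) : Prop :=
  IsConnAlloc G A ∧ ∀ B : Fin n → Finset V, IsConnAlloc G B → ¬ LeximinImproves u B A

/-- `G` is a star: there is a central vertex adjacent to exactly all other vertices. -/
def IsStar (G : SimpleGraph V) : Prop :=
  ∃ c : V, ∀ a b : V, G.Adj a b ↔ a ≠ b ∧ (a = c ∨ b = c)

/-- A submodular utility function. -/
def SubmodularUtil (u : Finset V → ℝ) : Prop :=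
  ∀ X Y : Finset V, u (X ∪ Y) + u (X ∩ Y) ≤ u X + u Y

/-- A utility function with binary marginal gains (and `u ∅ = 0`). -/
def BinaryMarginalGains (u : Finset V → ℝ) : Prop :=
  u ∅ = 0 ∧ ∀ (X : Finset V) (v : V),
    u (insert v X) - u X = 0 ∨ u (insert v X) - u X = 1

/-- On the path with `m` vertices (edges numbered `1, …, m-1` from left to right),
`itv m x y` is the bundle `[x, y]` of all vertices between positions `x` and `y`. -/
def itv (m x y : ℕ) : Finset (Fin m) :=
  Finset.univ.filter fun v : Fin m => x ≤ v.val ∧ v.val < y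

end GraphFair

lemma induce_pair_connected {V : Type*} (G : SimpleGraph V) {a b : V} (h : G.Adj a b) :
    (G.induce {a, b}).Connected := by
  rw [SimpleGraph.connected_iff]
  refine ⟨?_, ⟨⟨a, by simp⟩⟩⟩
  rintro ⟨x, hx⟩ ⟨y, hy⟩
  simp only [Set.mem_insert_iff, Set.mem_singleton_iff] at hx hy
  have hab : (G.induce {a,b}).Adj ⟨a, by simp⟩ ⟨b, by simp⟩ := by simpa using h
  rcases hx with rfl | rfl <;> rcases hy with rfl | rfl
  · rfl
  · exact hab.reachable
  · exact hab.symm.reachable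
  · rfl

lemma induce_triple_connected {V : Type*} (G : SimpleGraph V) {a b c : V}
    (hab : G.Adj a b) (hbc : G.Adj b c) :
    (G.induce {a, b, c}).Connected := by
  rw [SimpleGraph.connected_iff]
  refine ⟨?_, ⟨⟨a, by simp⟩⟩⟩
  have key : ∀ x : ({a,b,c} : Set V), (G.induce {a,b,c}).Reachable x ⟨b, by simp⟩ := by
    rintro ⟨x, hx⟩
    simp only [Set.mem_insert_iff, Set.mem_singleton_iff] at hx
    have h1 : (G.induce {a,b,c}).Adj ⟨a, by simp⟩ ⟨b, by simp⟩ := by simpa using hab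
    have h2 : (G.induce {a,b,c}).Adj ⟨b, by simp⟩ ⟨c, by simp⟩ := by simpa using hbc
    rcases hx with rfl | rfl | rfl
    · exact h1.reachable
    · rfl
    · exact h2.symm.reachable
  intro x y
  exact (key x).trans (key y).symm

noncomputable def fEx : Fin 4 → ℝ := ![3, 1, 1, 3]
noncomputable def uEx : Finset (Fin 4) → ℝ := fun X => ∑ v ∈ X, fEx v

lemma induce_singleton_connected {V : Type*} (G : SimpleGraph V) (a : V) :
    (G.induce {a}).Connected := by
  rw [SimpleGraph.connected_iff]
  refine ⟨?_, ⟨⟨a, by simp⟩⟩⟩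
  rintro ⟨x, hx⟩ ⟨y, hy⟩
  simp only [Set.mem_singleton_iff] at hx hy
  subst hx; subst hy; rfl


open GraphFair in
/-- There exists a path instance with two agents having identical additive
utilities that admits a connected allocation which is EF1 but not PMMS. -/
theorem exists_path_ef1_not_pmms :
    ∃ (m : ℕ) (u : Finset (Fin m) → ℝ) (A : Fin 2 → Finset (Fin m)),
      AdditiveUtil u ∧ IsConnAlloc (SimpleGraph.pathGraph m) A ∧
      IsAlphaEF1 (fun _ => u) A 1 ∧
      ¬ IsAlphaPMMS (SimpleGraph.pathGraph m) (fun _ => u) A 1 := by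
  refine ⟨4, uEx, ![{0}, {1,2,3}], ?_, ?_, ?_, ?_⟩
  · constructor
    · intro X; simp only [uEx, Finset.sum_singleton]
    · intro v; fin_cases v <;> norm_num [uEx, fEx]
  · refine ⟨?_, ?_, ?_⟩
    · intro v; fin_cases v
      · exact ⟨0, by decide⟩
      · exact ⟨1, by decide⟩
      · exact ⟨1, by decide⟩
      · exact ⟨1, by decide⟩
    · decide
    · intro i
      fin_cases i
      · show BundleConn (SimpleGraph.pathGraph 4) ({0} : Finset (Fin 4))
        right
        have : ((({0} : Finset (Fin 4)) : Set (Fin 4))) = {(0 : Fin 4)} := by simp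
        rw [this]
        exact induce_singleton_connected _ _
      · show BundleConn (SimpleGraph.pathGraph 4) ({1,2,3} : Finset (Fin 4))
        right
        have h12 : (SimpleGraph.pathGraph 4).Adj 1 2 := by
          rw [SimpleGraph.pathGraph_adj]; left; rfl
        have h23 : (SimpleGraph.pathGraph 4).Adj 2 3 := by
          rw [SimpleGraph.pathGraph_adj]; left; rfl
        have hset : ((({1,2,3} : Finset (Fin 4)) : Set (Fin 4))) = {(1:Fin 4), 2, 3} := by
          simp
        rw [hset]
        exact induce_triple_connected _ h12 h23
  · intro i j hij hne
    fin_cases i <;> fin_cases j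
    · simp at hij
    · refine ⟨3, by decide, ?_⟩
      show 1 * uEx (({1,2,3} : Finset (Fin 4)).erase 3) ≤ uEx ({0} : Finset (Fin 4))
      rw [show (({1,2,3} : Finset (Fin 4)).erase 3) = {1,2} by decide]
      norm_num [uEx, fEx, Finset.sum_pair, show ((1:Fin 4)) ≠ 2 by decide, show (![3, 1, 1, 3] : Fin 4 → ℝ) 2 = 1 from rfl]
    · refine ⟨0, by decide, ?_⟩
      show 1 * uEx (({0} : Finset (Fin 4)).erase 0) ≤ uEx ({1,2,3} : Finset (Fin 4))
      rw [show (({0} : Finset (Fin 4)).erase 0) = ∅ by decide]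
      have : uEx (∅ : Finset (Fin 4)) = 0 := by simp [uEx]
      rw [this, mul_zero]
      apply Finset.sum_nonneg
      intro v _
      fin_cases v <;> norm_num [fEx]
    · simp at hij
  · intro hP
    have hadj : AdjUnder (SimpleGraph.pathGraph 4) (![{0}, {1,2,3}] : Fin 2 → Finset (Fin 4)) 0 1 := by
      refine ⟨0, by decide, 1, by decide, ?_⟩
      rw [SimpleGraph.pathGraph_adj]; left; rfl
    have key : pmms (SimpleGraph.pathGraph 4) uEx ({0} ∪ {1,2,3}) ≤ uEx {0} := by
      have := hP 0 1 (by decide) (Or.inr hadj)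
      simpa using this
    have hmem : min (uEx {0,1}) (uEx {2,3}) ∈
        ((fun p : Finset (Fin 4) × Finset (Fin 4) => min (uEx p.1) (uEx p.2)) ''
        Part2 (SimpleGraph.pathGraph 4) ({0} ∪ {1,2,3})) := by
      refine ⟨({0,1}, {2,3}), ⟨by decide, by decide, ?_, ?_⟩, rfl⟩
      · right
        have h01 : (SimpleGraph.pathGraph 4).Adj 0 1 := by
          rw [SimpleGraph.pathGraph_adj]; left; rfl
        have : ((({0,1} : Finset (Fin 4)) : Set (Fin 4))) = {(0:Fin 4), 1} := by simp
        rw [this]; exact induce_pair_connected _ h01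
      · right
        have h23 : (SimpleGraph.pathGraph 4).Adj 2 3 := by
          rw [SimpleGraph.pathGraph_adj]; left; rfl
        have : ((({2,3} : Finset (Fin 4)) : Set (Fin 4))) = {(2:Fin 4), 3} := by simp
        rw [this]; exact induce_pair_connected _ h23
    have hbdd : BddAbove ((fun p : Finset (Fin 4) × Finset (Fin 4) => min (uEx p.1) (uEx p.2)) ''
        Part2 (SimpleGraph.pathGraph 4) ({0} ∪ {1,2,3})) := by
      refine ⟨8, ?_⟩
      rintro x ⟨p, hp, rfl⟩
      have h1 : uEx p.1 ≤ 8 := by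
        have hle : uEx p.1 ≤ ∑ v : Fin 4, fEx v := by
          apply Finset.sum_le_sum_of_subset_of_nonneg (Finset.subset_univ _)
          intro v _ _; fin_cases v <;> norm_num [fEx]
        calc uEx p.1 ≤ ∑ v : Fin 4, fEx v := hle
        _ = 8 := by norm_num [fEx, Fin.sum_univ_four, show (![3, 1, 1, 3] : Fin 4 → ℝ) 2 = 1 from rfl, show (![3, 1, 1, 3] : Fin 4 → ℝ) 3 = 3 from rfl]
      exact le_trans (min_le_left _ _) h1
    have hle4 : (4 : ℝ) ≤ pmms (SimpleGraph.pathGraph 4) uEx ({0} ∪ {1,2,3}) := by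
      have h := le_csSup hbdd hmem
      have hval : min (uEx {0,1}) (uEx {2,3}) = 4 := by
        norm_num [uEx, fEx, Finset.sum_pair, show ((0:Fin 4)) ≠ 1 by decide,
          show ((2:Fin 4)) ≠ 3 by decide, show (![3, 1, 1, 3] : Fin 4 → ℝ) 2 = 1 from rfl, show (![3, 1, 1, 3] : Fin 4 → ℝ) 3 = 3 from rfl]
      rw [hval] at h
      exact h
    have hval0 : uEx {0} = 3 := by norm_num [uEx, fEx]
    rw [hval0] at key
    linarith
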